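/- Let D be a triangulated category (satisfying the octahedral axiom). If an object F of D admits a cone decomposition with components (A_1,…,A_k), and for some index i the object A_i admits a cone decomposition with components (B_1,…,B_l), then F admits a cone decomposition with components (A_1,…,A_{i−1},B_1,…,B_l,A_{i+1},…,A_k). -/

import Mathlib

open CategoryTheory CategoryTheory.Limits CategoryTheory.Pretriangulated Filter
open scoped ENNReal

universe v₁ v₂ u₁ u₂

variable {D : Type u₁} [Category.{v₁} D] [Preadditive D] [HasZeroObject D]
  [HasShift D ℤ] [∀ n : ℤ, (shiftFunctor D n).Additive] [Pretriangulated D]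

/-- An object `F` admits a cone decomposition with the given list of components. -/
inductive ConeDecomp : D → List D → Prop
  | nil {F : D} (h : IsZero F) : ConeDecomp F []
  | step {X : D} (F : D) {l : List D} (A : D) (hX : ConeDecomp X l)
      (f : X ⟶ F) (g : F ⟶ A) (h : A ⟶ X⟦(1 : ℤ)⟧)
      (ht : Triangle.mk f g h ∈ distTriang D) : ConeDecomp F (l ++ [A])

open scoped Classical in
/-- The categorical complexity `δ_t(E,F)`. -/
noncomputable def catDelta [HasBinaryBiproducts D] (t : ℝ) (E F : D) : ℝ≥0∞ :=
  if IsZero F then 0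
  else sInf {x : ℝ≥0∞ | ∃ (ns : List ℤ) (F' : D),
      ns ≠ [] ∧ ConeDecomp (F ⊞ F') (ns.map fun n => E⟦n⟧) ∧
      x = (ns.map fun n => ENNReal.ofReal (Real.exp ((n : ℝ) * t))).sum}

/-- Objects split-generated by `G`. -/
inductive SplitGen (G : D) : D → Prop
  | self : SplitGen G G
  | zero {X : D} (h : IsZero X) : SplitGen G X
  | ofIso {X Y : D} (e : X ≅ Y) (h : SplitGen G X) : SplitGen G Y
  | shift {X : D} (n : ℤ) (h : SplitGen G X) : SplitGen G (X⟦n⟧)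
  | cone₂ {X Y Z : D} (f : X ⟶ Y) (g : Y ⟶ Z) (h : Z ⟶ X⟦(1 : ℤ)⟧)
      (ht : Triangle.mk f g h ∈ distTriang D) (hX : SplitGen G X) (hZ : SplitGen G Z) :
      SplitGen G Y
  | summand {X Y : D} (s : X ⟶ Y) (p : Y ⟶ X) (hsp : s ≫ p = 𝟙 X)
      (h : SplitGen G Y) : SplitGen G X

/-- `G` is a split-generator. -/
def IsSplitGenerator (G : D) : Prop := ∀ X : D, SplitGen G X


/-- Conjugating a distinguished triangle by isomorphisms of its objects. -/
lemma conj_distTriang {T : Triangle D} (hT : T ∈ distTriang D)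
    {X Y Z : D} (e₁ : X ≅ T.obj₁) (e₂ : Y ≅ T.obj₂) (e₃ : Z ≅ T.obj₃) :
    Triangle.mk (e₁.hom ≫ T.mor₁ ≫ e₂.inv) (e₂.hom ≫ T.mor₂ ≫ e₃.inv)
      (e₃.hom ≫ T.mor₃ ≫ e₁.inv⟦(1 : ℤ)⟧') ∈ distTriang D := by
  refine isomorphic_distinguished _ hT _ (Triangle.isoMk _ _ e₁ e₂ e₃ ?_ ?_ ?_) <;>
    simp [← Functor.map_comp, Triangle.mk]

/-- Cone decompositions transfer along isomorphisms. -/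
lemma ConeDecomp.ofIso {X F : D} {l : List D} (hX : ConeDecomp X l) (e : X ≅ F) :
    ConeDecomp F l := by
  cases hX with
  | nil h => exact .nil (h.of_iso e.symm)
  | step F' A hX' f g h ht =>
      exact .step _ A hX' (f ≫ e.hom) (e.inv ≫ g) h
        (by simpa [Triangle.mk] using conj_distTriang ht (Iso.refl _) e.symm (Iso.refl _))

/-- Inversion of a nontrivial cone decomposition. -/
lemma ConeDecomp.inv_step {F : D} {n : List D} (hF : ConeDecomp F n) :
    ∀ {l : List D} {C : D}, n = l ++ [C] →
      ∃ (X : D) (f : X ⟶ F) (g : F ⟶ C) (h : C ⟶ X⟦(1 : ℤ)⟧),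
        ConeDecomp X l ∧ Triangle.mk f g h ∈ distTriang D := by
  cases hF with
  | nil h => intro l C hn; simp at hn
  | step F' A hX f g h ht =>
      intro l C hn
      obtain ⟨rfl, hAC⟩ := List.append_inj' hn rfl
      obtain rfl : A = C := by simpa using hAC
      exact ⟨_, f, g, h, hX, ht⟩

/-- Gluing two cone decompositions along a distinguished triangle. -/
lemma ConeDecomp.glue [IsTriangulated D] {A : D} {m : List D} (hA : ConeDecomp A m) :
    ∀ {X F : D} {l₁ : List D} (_ : ConeDecomp X l₁)
      (f : X ⟶ F) (g : F ⟶ A) (h : A ⟶ X⟦(1 : ℤ)⟧)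
      (_ : Triangle.mk f g h ∈ distTriang D), ConeDecomp F (l₁ ++ m) := by
  induction hA with
  | nil hz =>
      intro X F l₁ hX f g h ht
      have : IsIso f := (Triangle.isZero₃_iff_isIso₁ _ ht).1 hz
      simpa using hX.ofIso (asIso f)
  | @step Y A m' B hY u p w htYAB ih =>
      intro X F l₁ hX f g h ht
      obtain ⟨Z, v₁₃, w₁₃, h₁₃⟩ := distinguished_cocone_triangle (g ≫ p)
      have oct := Triangulated.someOctahedron (u₁₂ := g) (u₂₃ := p) rfl
        (rot_of_distTriang _ ht) (rot_of_distTriang _ htYAB) h₁₃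
      have hshift := Pretriangulated.Triangle.shift_distinguished _ oct.mem (-1)
      have hconj := conj_distTriang hshift
        ((shiftEquiv D (1 : ℤ)).unitIso.app X) (Iso.refl (Z⟦(-1 : ℤ)⟧))
        ((shiftEquiv D (1 : ℤ)).unitIso.app Y)
      have hZ : ConeDecomp (Z⟦(-1 : ℤ)⟧) (l₁ ++ m') := ih hX _ _ _ hconj
      have hfin := inv_rot_of_distTriang _ h₁₃
      have := ConeDecomp.step F B hZ _ _ _ hfin
      simpa [List.append_assoc] using this

/-- A cone decomposition of a component can be inserted into a cone decomposition. -/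
theorem ConeDecomp.insert [IsTriangulated D]
    {F A : D} {l₁ l₂ m : List D}
    (hF : ConeDecomp F (l₁ ++ A :: l₂)) (hA : ConeDecomp A m) :
    ConeDecomp F (l₁ ++ m ++ l₂) := by
  induction l₂ using List.reverseRecOn generalizing F with
  | nil =>
      obtain ⟨X, f, g, h, hX, ht⟩ := hF.inv_step rfl
      simpa using hA.glue hX f g h ht
  | append_singleton l₂' C ih =>
      obtain ⟨X, f, g, h, hX, ht⟩ := hF.inv_step (l := l₁ ++ A :: l₂') (C := C) (by simp)
      have := ih hX
      simpa [List.append_assoc] using ConeDecomp.step F C this f g h ht
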